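/- The genus g(G) = 1 − χ(G) is multiplicative under the Zykov join: for finite simple graphs G and H, 1 − χ(G + H) = (1 − χ(G)) · (1 − χ(H)), where χ(G) = Σ_{k≥0} (−1)^k f_k(G) is the Euler characteristic of the clique complex of G. -/

import Mathlib

open SimpleGraph

/-- The Zykov join of two graphs: disjoint union plus all cross edges. -/
def zykovJoin {α β : Type} (G : SimpleGraph α) (H : SimpleGraph β) :
    SimpleGraph (α ⊕ β) where
  Adj x y := (G.sum H).Adj x y ∨ x.isLeft ≠ y.isLeft
  symm := by
    constructor
    intro x y h
    rcases h with h | h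
    · exact Or.inl h.symm
    · exact Or.inr (Ne.symm h)
  loopless := by
    constructor
    intro x h
    rcases h with h | h
    · exact h.ne rfl
    · exact h rfl

/-- `fVec G k` is the number of `(k+1)`-cliques of `G`. -/
noncomputable def fVec {α : Type} (G : SimpleGraph α) (k : ℕ) : ℕ :=
  Nat.card {s : Finset α // G.IsNClique (k + 1) s}

/-- The Euler characteristic of the clique complex of `G`:
`χ(G) = f₀ - f₁ + f₂ - ⋯`. -/
noncomputable def eulerChar {α : Type} (G : SimpleGraph α) : ℤ :=
  ∑ k ∈ Finset.range (Nat.card α), (-1 : ℤ) ^ k * fVec G k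

open Finset

open scoped Classical in
/-- All cliques of `G`, including the empty one. -/
noncomputable def allCliques {α : Type} [Fintype α] (G : SimpleGraph α) :
    Finset (Finset α) := Finset.univ.filter fun s => G.IsClique s

lemma mem_allCliques {α : Type} [Fintype α] {G : SimpleGraph α} {s : Finset α} :
    s ∈ allCliques G ↔ G.IsClique s := by
  classical simp [allCliques]

lemma fVec_eq_card {α : Type} [Fintype α] (G : SimpleGraph α) (k : ℕ) :
    (fVec G k : ℤ) = ((allCliques G).filter (fun s => s.card = k + 1)).card := by
  classical
  have : fVec G k = ((allCliques G).filter (fun s => s.card = k + 1)).card := by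
    rw [fVec, Nat.card_eq_fintype_card, Fintype.card_subtype]
    congr 1
    ext s
    simp [mem_allCliques, SimpleGraph.isNClique_iff, and_comm]
  exact_mod_cast this

lemma sum_allCliques {α : Type} [Fintype α] (G : SimpleGraph α) :
    ∑ s ∈ allCliques G, (-1 : ℤ) ^ s.card = 1 - eulerChar G := by
  classical
  have hmaps : ∀ s ∈ allCliques G, s.card ∈ Finset.range (Nat.card α + 1) := by
    intro s _
    simp only [Finset.mem_range, Nat.lt_succ_iff, Nat.card_eq_fintype_card]
    exact (Finset.card_le_card (Finset.subset_univ s)).trans_eq (Finset.card_univ)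
  rw [← Finset.sum_fiberwise_of_maps_to hmaps (fun s => (-1 : ℤ) ^ s.card)]
  have hinner : ∀ n ∈ Finset.range (Nat.card α + 1),
      ∑ s ∈ (allCliques G).filter (fun s => s.card = n), (-1 : ℤ) ^ s.card
        = (-1 : ℤ) ^ n * (((allCliques G).filter (fun s => s.card = n)).card : ℤ) := by
    intro n _
    rw [Finset.sum_congr rfl (fun s hs => by
      rw [(Finset.mem_filter.1 hs).2]), Finset.sum_const, nsmul_eq_mul, mul_comm]
  rw [Finset.sum_congr rfl hinner, Finset.sum_range_succ']
  have h0 : ((allCliques G).filter (fun s => s.card = 0)) = {∅} := by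
    ext s
    simp [mem_allCliques, Finset.card_eq_zero]
    rintro rfl
    simp
  rw [h0]
  simp only [pow_zero, one_mul, Finset.card_singleton, Nat.cast_one]
  rw [eulerChar]
  rw [Finset.sum_congr rfl (fun k _ => by rw [← fVec_eq_card G k])]
  have key : ∀ k ∈ Finset.range (Nat.card α),
      (-1 : ℤ) ^ (k + 1) * (fVec G k : ℤ) = -((-1 : ℤ) ^ k * (fVec G k : ℤ)) := by
    intro k _; ring
  rw [Finset.sum_congr rfl key, Finset.sum_neg_distrib]
  ring

lemma isClique_zykovJoin_iff {α β : Type} (G : SimpleGraph α) (H : SimpleGraph β)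
    (u : Finset (α ⊕ β)) :
    (zykovJoin G H).IsClique u ↔ G.IsClique u.toLeft ∧ H.IsClique u.toRight := by
  constructor
  · intro h
    constructor
    · intro a ha b hb hab
      have := h (Finset.mem_coe.1 (Finset.mem_toLeft.1 ha))
        (Finset.mem_coe.1 (Finset.mem_toLeft.1 hb)) (by simpa using hab)
      rcases this with h' | h'
      · simpa using h'
      · simp at h'
    · intro a ha b hb hab
      have := h (Finset.mem_coe.1 (Finset.mem_toRight.1 ha))
        (Finset.mem_coe.1 (Finset.mem_toRight.1 hb)) (by simpa using hab)
      rcases this with h' | h'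
      · simpa using h'
      · simp at h'
  · rintro ⟨hG, hH⟩ x hx y hy hxy
    cases x with
    | inl a =>
      cases y with
      | inl b =>
        refine Or.inl ?_
        have hab : a ≠ b := fun h => hxy (by rw [h])
        simpa using hG (Finset.mem_toLeft.2 (Finset.mem_coe.1 hx))
          (Finset.mem_toLeft.2 (Finset.mem_coe.1 hy)) hab
      | inr b => exact Or.inr (by simp)
    | inr a =>
      cases y with
      | inl b => exact Or.inr (by simp)
      | inr b =>
        refine Or.inl ?_
        have hab : a ≠ b := fun h => hxy (by rw [h])
        simpa using hH (Finset.mem_toRight.2 (Finset.mem_coe.1 hx))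
          (Finset.mem_toRight.2 (Finset.mem_coe.1 hy)) hab

lemma allCliques_zykovJoin_sum {α β : Type} [Fintype α] [Fintype β]
    (G : SimpleGraph α) (H : SimpleGraph β) :
    ∑ u ∈ allCliques (zykovJoin G H), (-1 : ℤ) ^ u.card
      = (∑ s ∈ allCliques G, (-1 : ℤ) ^ s.card) * (∑ t ∈ allCliques H, (-1 : ℤ) ^ t.card) := by
  classical
  rw [Finset.sum_mul_sum]
  rw [← Finset.sum_product']
  refine Finset.sum_nbij' (fun u => (u.toLeft, u.toRight))
    (fun p => p.1.disjSum p.2) ?_ ?_ ?_ ?_ ?_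
  · intro u hu
    rw [mem_allCliques, isClique_zykovJoin_iff] at hu
    simp [Finset.mem_product, mem_allCliques, hu.1, hu.2]
  · intro p hp
    simp only [Finset.mem_product, mem_allCliques] at hp
    rw [mem_allCliques, isClique_zykovJoin_iff]
    simpa using hp
  · intro u hu
    exact Finset.toLeft_disjSum_toRight
  · intro p hp
    simp
  · intro u hu
    rw [← Finset.card_toLeft_add_card_toRight, pow_add]

/-- The genus `1 - χ` is multiplicative under the Zykov join. -/
theorem genus_zykovJoin {α β : Type} [Fintype α] [Fintype β]
    (G : SimpleGraph α) (H : SimpleGraph β) :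
    1 - eulerChar (zykovJoin G H) = (1 - eulerChar G) * (1 - eulerChar H) := by
  rw [← sum_allCliques, ← sum_allCliques, ← sum_allCliques, allCliques_zykovJoin_sum]
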